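/- Let H(z₁, z₂) = |z₁|² + |z₂|⁴ on ℂ². The circle P₁ = {(z₁, 0) : |z₁| = 1} is contained in H⁻¹(1) and is invariant under the flow of X_H, and every solution starting on P₁ is periodic with minimal period π. Moreover, for every solution x(t) = (z₁(t), z₂(t)) of ẋ = X_H(x) with H(x(0)) = 1 and z₂(0) ≠ 0, and for every t₀ ∈ ℝ, there exist times t⁺ > t₀ and t⁻ < t₀ with Im z₂(t^±) = 0 and Re z₂(t^±) > 0; that is, every trajectory in H⁻¹(1) off P₁ hits the interior of the disk Σ₁ = {(z₁,z₂) ∈ H⁻¹(1) : Im z₂ = 0, Re z₂ ∈ [0,1]} in forward and in backward time. -/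

import Mathlib

open Complex

/-- A pair `(z₁, z₂)` solves the Hamiltonian equations of `H(z₁,z₂) = |z₁|² + |z₂|⁴`,
namely `X_H = (2y₁, −2x₁, 4|z₂|²y₂, −4|z₂|²x₂)`. -/
def IsHSol (z₁ z₂ : ℝ → ℂ) : Prop :=
  ∀ t : ℝ,
    HasDerivAt z₁ (Complex.ofReal (2 * (z₁ t).im) +
      Complex.ofReal (-2 * (z₁ t).re) * Complex.I) t ∧
    HasDerivAt z₂ (Complex.ofReal (4 * ‖(z₂ t)‖ ^ 2 * (z₂ t).im) +
      Complex.ofReal (-4 * ‖(z₂ t)‖ ^ 2 * (z₂ t).re) * Complex.I) t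

/-- The circle `P₁ = {(z₁, 0) : |z₁| = 1}`. -/
def P₁ : Set (ℂ × ℂ) := {p : ℂ × ℂ | ‖p.1‖ = 1 ∧ p.2 = 0}

/- ### Auxiliary lemmas -/

lemma XH_eq (c : ℝ) (z : ℂ) :
    Complex.ofReal (c * z.im) + Complex.ofReal (-c * z.re) * Complex.I
      = -(c:ℂ) * I * z := by
  apply Complex.ext <;> simp <;> ring

/-- Solution of the linear ODE `f' = c f`. -/
lemma ode_sol {f : ℝ → ℂ} {c : ℂ} (h : ∀ t, HasDerivAt f (c * f t) t) :
    ∀ t : ℝ, f t = f 0 * Complex.exp (c * t) := by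
  have key : ∀ t : ℝ, f t * Complex.exp (-(c * t)) = f 0 := by
    have hd : ∀ t : ℝ, HasDerivAt (fun t : ℝ => f t * Complex.exp (-(c * t))) 0 t := by
      intro t
      have he : HasDerivAt (fun t : ℝ => Complex.exp (-(c * (t:ℂ))))
          (-c * Complex.exp (-(c*t))) t := by
        have h1 : HasDerivAt (fun t : ℝ => -(c * (t:ℂ))) (-c) t := by
          have h0 : HasDerivAt (fun y : ℝ => -(c * Complex.ofRealCLM y)) _ t :=
            ((Complex.ofRealCLM.hasDerivAt (x := t)).const_mul c).neg
          simpa using h0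
        simpa [mul_comm] using h1.cexp
      have : HasDerivAt (fun t : ℝ => f t * Complex.exp (-(c * t))) _ t := (h t).mul he
      convert this using 1
      ring
    intro t
    have : (fun t : ℝ => f t * Complex.exp (-(c * t))) t
        = (fun t : ℝ => f t * Complex.exp (-(c * t))) 0 :=
      is_const_of_deriv_eq_zero (fun x => (hd x).differentiableAt)
        (fun x => (hd x).deriv) t 0
    simpa using this
  intro t
  have := key t
  have h2 : f t * (Complex.exp (-(c * t)) * Complex.exp (c * t))
      = f 0 * Complex.exp (c*t) := by
    rw [← mul_assoc, this]
  simpa [← Complex.exp_add] using h2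

lemma conj_deriv {f : ℝ → ℂ} {d : ℂ} {t : ℝ} (h : HasDerivAt f d t) :
    HasDerivAt (fun t => (starRingEnd ℂ) (f t)) ((starRingEnd ℂ) d) t := by
  exact (Complex.conjCLE.toContinuousLinearMap.hasFDerivAt.comp_hasDerivAt t h)

/-- If `f' = (c t) i f` with `c` real, then `|f|²` is constant. -/
lemma normSq_const {f : ℝ → ℂ} {c : ℝ → ℝ}
    (h : ∀ t, HasDerivAt f ((c t : ℂ) * I * f t) t) :
    ∀ t : ℝ, Complex.normSq (f t) = Complex.normSq (f 0) := by
  have hd : ∀ t : ℝ, HasDerivAt (fun t => f t * (starRingEnd ℂ) (f t)) 0 t := by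
    intro t
    have : HasDerivAt (fun t => f t * (starRingEnd ℂ) (f t)) _ t := (h t).mul (conj_deriv (h t))
    convert this using 1
    simp [map_mul, Complex.conj_I]
    ring
  intro t
  have : f t * (starRingEnd ℂ) (f t) = f 0 * (starRingEnd ℂ) (f 0) := by
    have := is_const_of_deriv_eq_zero (f := fun t => f t * (starRingEnd ℂ) (f t))
      (fun x => (hd x).differentiableAt) (fun x => (hd x).deriv) t 0
    simpa using this
  have h2 := congrArg Complex.re this
  simpa [Complex.mul_conj] using h2
/-- Explicit formula for the first component. -/
lemma z1_formula {z₁ z₂ : ℝ → ℂ} (h : IsHSol z₁ z₂) :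
    ∀ t : ℝ, z₁ t = z₁ 0 * Complex.exp ((-2 * I) * t) := by
  apply ode_sol
  intro t
  have := (h t).1
  rw [show ((2 : ℝ) * (z₁ t).im) = (2:ℝ) * (z₁ t).im from rfl] at this
  have heq : Complex.ofReal (2 * (z₁ t).im) +
      Complex.ofReal (-2 * (z₁ t).re) * Complex.I = -2 * I * z₁ t := by
    have := XH_eq 2 (z₁ t)
    simpa using this
  rwa [heq] at this

/-- Explicit formula for the second component. -/
lemma z2_formula {z₁ z₂ : ℝ → ℂ} (h : IsHSol z₁ z₂) :
    ∀ t : ℝ, z₂ t = z₂ 0 *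
      Complex.exp ((-(4 * (Complex.normSq (z₂ 0)) : ℝ) : ℂ) * I * t) := by
  have hderiv : ∀ t : ℝ, HasDerivAt z₂
      (((-(4 * ‖(z₂ t)‖ ^ 2) : ℝ) : ℂ) * I * z₂ t) t := by
    intro t
    have := (h t).2
    have heq : Complex.ofReal (4 * ‖(z₂ t)‖ ^ 2 * (z₂ t).im) +
        Complex.ofReal (-(4 * ‖(z₂ t)‖ ^ 2) * (z₂ t).re) * Complex.I
        = -((4 * ‖(z₂ t)‖ ^ 2 : ℝ) : ℂ) * I * z₂ t :=
      XH_eq (4 * ‖(z₂ t)‖ ^ 2) (z₂ t)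
    rw [show (-4 * ‖(z₂ t)‖ ^ 2 * (z₂ t).re)
        = (-(4 * ‖(z₂ t)‖ ^ 2) * (z₂ t).re) by ring] at this
    rw [heq] at this
    convert this using 2
    push_cast
    ring
  have hns : ∀ t : ℝ, Complex.normSq (z₂ t) = Complex.normSq (z₂ 0) :=
    normSq_const (c := fun t => -(4 * ‖(z₂ t)‖ ^ 2)) hderiv
  apply ode_sol
  intro t
  have := hderiv t
  have habs : ‖(z₂ t)‖ ^ 2 = Complex.normSq (z₂ 0) := by
    rw [Complex.sq_norm, hns]
  rw [habs] at this
  convert this using 1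
  push_cast
  ring

/-- For `H(z₁,z₂) = |z₁|² + |z₂|⁴`: the circle `P₁` is contained in `H⁻¹(1)`, is invariant
under the flow of `X_H`, and carries periodic orbits of minimal period `π`; moreover every
solution in `H⁻¹(1)` with `z₂(0) ≠ 0` hits `{Im z₂ = 0, Re z₂ > 0}` (the interior of the
disk `Σ₁`) in forward and in backward time from any `t₀`. -/
theorem stmt_16 :
    (∀ p ∈ P₁, ‖p.1‖ ^ 2 + ‖p.2‖ ^ 4 = 1) ∧
    (∀ z₁ z₂ : ℝ → ℂ, IsHSol z₁ z₂ → (z₁ 0, z₂ 0) ∈ P₁ →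
      (∀ t : ℝ, (z₁ t, z₂ t) ∈ P₁) ∧
      (∀ t : ℝ, z₁ (t + Real.pi) = z₁ t ∧ z₂ (t + Real.pi) = z₂ t) ∧
      (∀ T : ℝ, 0 < T → (∀ t : ℝ, z₁ (t + T) = z₁ t ∧ z₂ (t + T) = z₂ t) →
        Real.pi ≤ T)) ∧
    (∀ z₁ z₂ : ℝ → ℂ, IsHSol z₁ z₂ →
      ‖(z₁ 0)‖ ^ 2 + ‖(z₂ 0)‖ ^ 4 = 1 → z₂ 0 ≠ 0 →
      ∀ t₀ : ℝ,
        (∃ tp : ℝ, t₀ < tp ∧ (z₂ tp).im = 0 ∧ 0 < (z₂ tp).re) ∧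
        (∃ tm : ℝ, tm < t₀ ∧ (z₂ tm).im = 0 ∧ 0 < (z₂ tm).re)) := by
  refine ⟨?_, ?_, ?_⟩
  · rintro p ⟨h1, h2⟩
    rw [h1, h2]
    simp
  · rintro z₁ z₂ h ⟨h1, h2⟩
    have h1' : ‖(z₁ 0)‖ = 1 := h1
    have h2' : z₂ 0 = 0 := h2
    have hz1 := z1_formula h
    have hz2 := z2_formula h
    have hz2zero : ∀ t : ℝ, z₂ t = 0 := by
      intro t; rw [hz2 t, h2', zero_mul]
    have habs1 : ∀ t : ℝ, ‖(z₁ t)‖ = 1 := by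
      intro t
      rw [hz1 t, norm_mul, h1', one_mul, Complex.norm_exp]
      simp
    refine ⟨fun t => ⟨habs1 t, hz2zero t⟩, ?_, ?_⟩
    · intro t
      refine ⟨?_, by rw [hz2zero, hz2zero]⟩
      rw [hz1 (t + Real.pi), hz1 t]
      have : (-2 * I) * ((t + Real.pi : ℝ) : ℂ)
          = (-2 * I) * (t : ℂ) + ((-1 : ℤ) : ℂ) * (2 * (Real.pi : ℂ) * I) := by
        push_cast; ring
      rw [this, Complex.exp_add, Complex.exp_int_mul_two_pi_mul_I, mul_one]
    · intro T hT hper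
      have hz10 : z₁ 0 ≠ 0 := by
        intro hc; rw [hc] at h1'; simp at h1'
      have hTe : z₁ T = z₁ 0 := by simpa using (hper 0).1
      rw [hz1 T, hz1 0] at hTe
      simp only [Complex.ofReal_zero, mul_zero, Complex.exp_zero, mul_one] at hTe
      have hexp : Complex.exp ((-2 * I) * (T : ℂ)) = 1 := by
        exact mul_left_cancel₀ hz10 (by simpa using hTe)
      rw [Complex.exp_eq_one_iff] at hexp
      obtain ⟨n, hn⟩ := hexp
      have him := congrArg Complex.im hn
      simp [Complex.mul_im, Complex.mul_re] at him
      -- him : -2 * T = n * (2 * π)  (in some form)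
      have hpi := Real.pi_pos
      have hnneg : (n : ℝ) < 0 := by nlinarith
      have hn1 : (n : ℝ) ≤ -1 := by
        have : n < 0 := by exact_mod_cast hnneg
        have : n ≤ -1 := by omega
        exact_mod_cast this
      nlinarith
  · intro z₁ z₂ h hH hz20 t₀
    have hz2 := z2_formula h
    set r2 : ℝ := Complex.normSq (z₂ 0) with hr2
    have hr2pos : 0 < r2 := Complex.normSq_pos.mpr hz20
    set ω : ℝ := 4 * r2 with hω
    have hωpos : 0 < ω := by positivity
    set θ : ℝ := Complex.arg (z₂ 0) with hθ
    have habspos : 0 < ‖(z₂ 0)‖ := norm_pos_iff.mpr hz20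
    have key : ∀ k : ℤ, (z₂ ((θ + 2 * Real.pi * k) / ω)).im = 0 ∧
        0 < (z₂ ((θ + 2 * Real.pi * k) / ω)).re := by
      intro k
      set tk : ℝ := (θ + 2 * Real.pi * k) / ω with htk
      have hωt : ω * tk = θ + 2 * Real.pi * k := by
        rw [htk]; field_simp
      have hz : z₂ tk = (‖(z₂ 0)‖ : ℂ) := by
        rw [hz2 tk]
        have hz0 : z₂ 0 = (‖(z₂ 0)‖ : ℂ) * Complex.exp (θ * I) :=
          (Complex.norm_mul_exp_arg_mul_I (z₂ 0)).symm
        nth_rewrite 1 [hz0]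
        rw [mul_assoc, ← Complex.exp_add]
        have hc : ((ω : ℂ) * (tk : ℂ)) = ((θ : ℂ) + 2 * (Real.pi : ℂ) * (k : ℂ)) := by
          have := congrArg (Complex.ofReal) hωt
          push_cast at this ⊢
          exact this
        have harg : (θ : ℂ) * I + (-(ω : ℝ) : ℂ) * I * (tk : ℂ)
            = ((-k : ℤ) : ℂ) * (2 * (Real.pi : ℂ) * I) := by
          push_cast at hc ⊢
          linear_combination (-I) * hc
        rw [harg, Complex.exp_int_mul_two_pi_mul_I, mul_one]
      rw [hz]
      constructor
      · simp
      · simpa using habspos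
    have h2pi : (0:ℝ) < 2 * Real.pi := by positivity
    constructor
    · obtain ⟨k, hk⟩ := exists_int_gt ((ω * t₀ - θ) / (2 * Real.pi))
      refine ⟨(θ + 2 * Real.pi * k) / ω, ?_, (key k).1, (key k).2⟩
      rw [lt_div_iff₀ hωpos]
      have := (div_lt_iff₀ h2pi).mp hk
      nlinarith
    · obtain ⟨k, hk⟩ := exists_int_lt ((ω * t₀ - θ) / (2 * Real.pi))
      refine ⟨(θ + 2 * Real.pi * k) / ω, ?_, (key k).1, (key k).2⟩
      rw [div_lt_iff₀ hωpos]
      have h2 : (k:ℝ) * (2 * Real.pi) < ω * t₀ - θ := (lt_div_iff₀ h2pi).mp hk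
      nlinarith
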